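/- arXiv:1803.11332 — 7 statements merged into one kernel-verified Lean document; each statement's English description precedes it below -/
import Mathlib

section
/- Let W⃗ be a Y-valued transition matrix on X. Then the following two sets of Y-indexed families of d×d matrices are equal: (i) the set of all families ( [W_y, A] + F∘W_y + c·W_y )_{y∈Y}, where A ranges over d×d matrices with Aᵀ·u_X = 0, c over ℝ, f over functions X → ℝ, and F∘W_y denotes the matrix with entries (f(x) − f(x'))·W_y(x|x'); (ii) the set of all families ( [W_y, A'] + c·W_y )_{y∈Y}, where A' ranges over d×d matrices with Σ_{x,x'∈X} A'(x,x') = 0 and c over ℝ. Here [M,A] := MA − AM. -/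
open Matrix

lemma gradW {X : Type*} [Fintype X] [DecidableEq X] (W : Matrix X X ℝ) (f : X → ℝ) :
    Matrix.of (fun x x' => (f x - f x') * W x x')
      = Matrix.diagonal f * W - W * Matrix.diagonal f := by
  ext i j
  simp [Matrix.diagonal_mul, Matrix.mul_diagonal]
  ring

/-- Let `W⃗` be a `Y`-valued transition matrix on `X`.  The set of families
`([W_y, A] + F∘W_y + c • W_y)_y`, with `Aᵀ u_X = 0`, `c ∈ ℝ`, `f : X → ℝ` and
`(F∘W_y) x x' = (f x − f x') * W_y x x'`, equals the set of families
`([W_y, A'] + c • W_y)_y` with `∑_{x,x'} A' x x' = 0` and `c ∈ ℝ`. -/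
theorem stmt10 {X Y : Type*} [Fintype X] [DecidableEq X] [Fintype Y]
    (W : Y → Matrix X X ℝ)
    (hpos : ∀ y x x', 0 ≤ W y x x')
    (hstoch : ∀ x', ∑ x, (∑ y, W y) x x' = 1) :
    {g : Y → Matrix X X ℝ | ∃ (A : Matrix X X ℝ) (c : ℝ) (f : X → ℝ),
        Aᵀ *ᵥ (fun _ => (1 : ℝ)) = 0 ∧
        g = fun y => (W y * A - A * W y)
          + Matrix.of (fun x x' => (f x - f x') * W y x x') + c • W y}
      = {g : Y → Matrix X X ℝ | ∃ (A' : Matrix X X ℝ) (c : ℝ),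
        (∑ x, ∑ x', A' x x') = 0 ∧
        g = fun y => (W y * A' - A' * W y) + c • W y} := by
  ext g
  simp only [Set.mem_setOf_eq]
  constructor
  · rintro ⟨A, c, f, hA, rfl⟩
    have hcol : ∀ x', ∑ x, A x x' = 0 := by
      intro x'
      have := congrFun hA x'
      simpa [mulVec, dotProduct, transpose_apply] using this
    set t : ℝ := (∑ x, f x) / (Fintype.card X) with ht
    refine ⟨A - Matrix.diagonal f + t • 1, c, ?_, ?_⟩
    · rcases isEmpty_or_nonempty X with h | h
      · simp
      · have hcard : (Fintype.card X : ℝ) ≠ 0 := by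
          exact_mod_cast Fintype.card_ne_zero
        simp only [Matrix.add_apply, Matrix.sub_apply, Matrix.smul_apply,
          Matrix.one_apply, Matrix.diagonal_apply, smul_eq_mul]
        rw [Finset.sum_comm]
        push_cast
        simp only [Finset.sum_add_distrib, Finset.sum_sub_distrib]
        have h1 : ∑ x' : X, ∑ x : X, A x x' = 0 := by
          simp [hcol]
        have h2 : ∑ x' : X, ∑ x : X, (if x = x' then f x else 0) = ∑ x : X, f x := by
          simp
        have h3 : ∑ x' : X, ∑ x : X, (t * if x = x' then (1:ℝ) else 0) = ∑ x : X, f x := by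
          simp only [mul_ite, mul_one, mul_zero, Finset.sum_ite_eq, Finset.sum_ite_eq', Finset.mem_univ, if_pos,
            Finset.sum_const, nsmul_eq_mul, ht]
          rw [mul_comm, Finset.card_univ, div_mul_cancel₀ _ hcard]
        rw [h1, h2, h3]
        ring
    · funext y
      rw [gradW]
      simp only [Matrix.mul_sub, Matrix.sub_mul, Matrix.mul_add, Matrix.add_mul,
        Matrix.mul_smul, Matrix.smul_mul, mul_one, one_mul]
      abel
  · rintro ⟨A', c, hA', rfl⟩
    refine ⟨A' + Matrix.diagonal (fun z => -∑ x, A' x z), c,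
      (fun z => -∑ x, A' x z), ?_, ?_⟩
    · funext x'
      simp [mulVec, dotProduct, transpose_apply, Finset.sum_add_distrib,
        Matrix.diagonal_apply]
    · funext y
      rw [gradW]
      simp only [Matrix.mul_add, Matrix.add_mul]
      abel
end

section
/- Let M be a d×d real matrix such that Mᵀ has d distinct real eigenvalues with eigenvectors f_1, …, f_d, and suppose the all-ones vector u decomposes as u = Σ_{j=1}^d a_j f_j with a_j ≠ 0 for every j. Then every d×d matrix A satisfying MA = AM and Aᵀ·u = 0 is the zero matrix. -/
open Matrix

/-- Let `M` be a `d × d` real matrix such that `Mᵀ` has `d` distinct real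
eigenvalues `μ_j` with eigenvectors `f_j`, and suppose the all-ones vector `u` decomposes
as `u = ∑ j, a_j • f_j` with all `a_j ≠ 0`.  Then every matrix `A` with `M A = A M` and
`Aᵀ u = 0` is zero. -/
theorem stmt12 {ι : Type*} [Fintype ι] [DecidableEq ι]
    (M : Matrix ι ι ℝ) (μ : ι → ℝ) (f : ι → ι → ℝ)
    (hμ : Function.Injective μ)
    (hf : ∀ j, f j ≠ 0)
    (heig : ∀ j, Mᵀ *ᵥ f j = μ j • f j)
    (a : ι → ℝ) (ha : ∀ j, a j ≠ 0)
    (hu : (fun _ => (1 : ℝ)) = ∑ j, a j • f j)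
    (A : Matrix ι ι ℝ)
    (hAM : M * A = A * M)
    (hAu : Aᵀ *ᵥ (fun _ => (1 : ℝ)) = 0) :
    A = 0 := by
  rcases isEmpty_or_nonempty ι with h | h
  · ext i j; exact isEmptyElim i
  set T := Mᵀ.mulVecLin with hT
  set S := Aᵀ.mulVecLin with hS
  -- eigenvectors
  have hev : ∀ j, Module.End.HasEigenvector T (μ j) (f j) := fun j =>
    ⟨Module.End.mem_eigenspace_iff.mpr (by rw [hT, Matrix.mulVecLin_apply]; exact heig j), hf j⟩
  have hli : LinearIndependent ℝ f :=
    Module.End.eigenvectors_linearIndependent' T μ hμ f hev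
  let B : Module.Basis ι ℝ (ι → ℝ) :=
    basisOfLinearIndependentOfCardEqFinrank hli
      (by simp [Module.finrank_fintype_fun_eq_card])
  have hB : ∀ j, B j = f j := fun j => by
    simp [B, coe_basisOfLinearIndependentOfCardEqFinrank]
  -- S and T commute
  have hST : T ∘ₗ S = S ∘ₗ T := by
    rw [hT, hS, ← Matrix.mulVecLin_mul, ← Matrix.mulVecLin_mul,
      ← Matrix.transpose_mul, ← Matrix.transpose_mul, hAM]
  have hSTv : ∀ v, T (S v) = S (T v) := fun v =>
    congrFun (congrArg (DFunLike.coe) hST) v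
  -- S (f j) = c j • f j
  have key : ∀ j, S (f j) = (B.repr (S (f j)) j) • f j := by
    intro j
    have hTfj : T (f j) = μ j • f j := by rw [hT, Matrix.mulVecLin_apply]; exact heig j
    have h1 : T (S (f j)) = μ j • S (f j) := by
      rw [hSTv, hTfj, _root_.map_smul]
    -- expand in basis
    have h2 : ∀ k, μ k * B.repr (S (f j)) k = μ j * B.repr (S (f j)) k := by
      intro k
      have hrw : B.repr (T (S (f j))) k = μ j * B.repr (S (f j)) k := by
        rw [h1, _root_.map_smul]; simp
      rw [← hrw]
      -- compute B.repr (T v) k = μ k * B.repr v k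
      have hTv : T (S (f j)) = ∑ i, (B.repr (S (f j)) i * μ i) • f i := by
        conv_lhs => rw [← B.sum_repr (S (f j))]
        rw [map_sum]
        congr 1; ext i
        rw [hB, _root_.map_smul]
        have : T (f i) = μ i • f i := by rw [hT, Matrix.mulVecLin_apply]; exact heig i
        rw [this, smul_smul]
      rw [hTv]
      rw [map_sum]
      simp only [_root_.map_smul, Finsupp.coe_finset_sum, Finset.sum_apply, Finsupp.coe_smul,
        Pi.smul_apply, smul_eq_mul]
      rw [Finset.sum_eq_single k]
      · rw [show f k = B k from (hB k).symm, B.repr_self_apply]; simp [mul_comm]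
      · intro i _ hik
        rw [show f i = B i from (hB i).symm, B.repr_self_apply]; simp [hik]
      · simp
    have h3 : ∀ k, k ≠ j → B.repr (S (f j)) k = 0 := by
      intro k hk
      have h := h2 k
      have hne : μ k ≠ μ j := fun h => hk (hμ h)
      by_contra hc
      exact hne (mul_right_cancel₀ hc h)
    conv_lhs => rw [← B.sum_repr (S (f j))]
    rw [Finset.sum_eq_single j]
    · rw [hB]
    · intro i _ hij; rw [h3 i hij]; simp
    · simp
  -- Apply to u
  have hSu : S (fun _ => (1:ℝ)) = 0 := hAu
  have hsum : (∑ j, (a j * B.repr (S (f j)) j) • f j) = 0 := by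
    rw [← hSu, hu, map_sum]
    refine Finset.sum_congr rfl fun j _ => ?_
    rw [_root_.map_smul]
    conv_rhs => rw [key j]
    rw [smul_smul]
  have hzero : ∀ j, a j * B.repr (S (f j)) j = 0 := by
    have := linearIndependent_iff'.mp hli Finset.univ _ hsum
    intro j; exact this j (Finset.mem_univ j)
  have hSfj : ∀ j, S (f j) = 0 := by
    intro j
    have hc0 : B.repr (S (f j)) j = 0 := by
      rcases mul_eq_zero.mp (hzero j) with h | h
      · exact absurd h (ha j)
      · exact h
    rw [key j, hc0, zero_smul]
  have hS0 : S = 0 := by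
    apply B.ext
    intro j
    rw [hB]; exact hSfj j
  have hAv : ∀ v, v ᵥ* A = 0 := fun v => by
    have := congrFun (congrArg DFunLike.coe hS0) v
    simpa [hS] using this
  ext i j
  have := congrFun (hAv (Pi.single i 1)) j
  simpa [Matrix.vecMul, dotProduct, Pi.single_apply] using this
end

section
/- Let M and M' be d×d real matrices such that Mᵀ has d distinct real eigenvalues with eigenvectors f_1, …, f_d and M'ᵀ has d distinct real eigenvalues with eigenvectors f'_1, …, f'_d, and suppose that no f'_j lies in the span of any proper subset of {f_1, …, f_d}. Then every d×d matrix A satisfying MA = AM, M'A = AM', and Σ_{x,x'} A(x,x') = 0 is the zero matrix. -/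
open Matrix


private lemma aux13 {ι : Type*} [Fintype ι] [DecidableEq ι] [Nonempty ι]
    (M : Matrix ι ι ℝ) (μ : ι → ℝ) (f : ι → ι → ℝ)
    (hμ : Function.Injective μ) (hf : ∀ j, f j ≠ 0)
    (heig : ∀ j, Mᵀ *ᵥ f j = μ j • f j)
    (A : Matrix ι ι ℝ) (hAM : M * A = A * M) :
    ∃ a : ι → ℝ, ∀ j, Aᵀ *ᵥ f j = a j • f j := by
  have hli : LinearIndependent ℝ f := by
    apply Module.End.eigenvectors_linearIndependent' (Matrix.mulVecLin Mᵀ) μ hμ f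
    intro i
    refine ⟨?_, hf i⟩
    rw [Module.End.mem_eigenspace_iff, Matrix.mulVecLin_apply]
    exact heig i
  let b : Module.Basis ι ℝ (ι → ℝ) := basisOfLinearIndependentOfCardEqFinrank hli ((Module.finrank_pi ℝ).symm)
  have hb : ∀ i, b i = f i := fun i => congrFun (coe_basisOfLinearIndependentOfCardEqFinrank hli _) i
  have key : ∀ (v : ι → ℝ) (k : ι), b.repr (Mᵀ *ᵥ v) k = μ k * b.repr v k := by
    intro v k
    conv_lhs => rw [← b.sum_repr v]
    have : Mᵀ *ᵥ (∑ i, b.repr v i • b i) = ∑ i, b.repr v i • (μ i • b i) := by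
      simp only [← Matrix.mulVecLin_apply, map_sum, _root_.map_smul]
      refine Finset.sum_congr rfl fun i _ => ?_
      rw [Matrix.mulVecLin_apply, hb]
      exact congrArg _ (heig i)
    rw [this]
    simp [Finsupp.single_apply, mul_comm]
  -- uniqueness of eigenvectors
  refine ⟨fun j => b.repr (Aᵀ *ᵥ f j) j, fun j => ?_⟩
  set v := Aᵀ *ᵥ f j with hv
  have hev : Mᵀ *ᵥ v = μ j • v := by
    rw [hv, mulVec_mulVec, ← transpose_mul, ← hAM, transpose_mul, ← mulVec_mulVec,
      heig j, mulVec_smul]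
  have hzero : ∀ k, k ≠ j → b.repr v k = 0 := by
    intro k hk
    have h1 := key v k
    rw [hev] at h1
    simp only [_root_.map_smul, Finsupp.smul_apply, smul_eq_mul] at h1
    have : (μ j - μ k) * b.repr v k = 0 := by ring_nf; linarith
    rcases mul_eq_zero.1 this with h | h
    · exact absurd (hμ (by linarith)) (Ne.symm hk)
    · exact h
  have := b.sum_repr v
  rw [Finset.sum_eq_single j (fun k _ hk => by rw [hzero k hk, zero_smul])
    (fun h => absurd (Finset.mem_univ j) h)] at this
  rw [← this, hb]


/-- Let `M`, `M'` be `d × d` real matrices such that `Mᵀ` (resp. `M'ᵀ`)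
has `d` distinct real eigenvalues with eigenvectors `f_1, …, f_d` (resp. `f'_1, …, f'_d`),
and suppose no `f'_j` lies in the span of a proper subset of `{f_1, …, f_d}`.  Then every
matrix `A` with `M A = A M`, `M' A = A M'` and `∑_{x,x'} A x x' = 0` is zero. -/
theorem stmt13 {ι : Type*} [Fintype ι] [DecidableEq ι]
    (M M' : Matrix ι ι ℝ) (μ μ' : ι → ℝ) (f f' : ι → ι → ℝ)
    (hμ : Function.Injective μ) (hμ' : Function.Injective μ')
    (hf : ∀ j, f j ≠ 0) (hf' : ∀ j, f' j ≠ 0)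
    (heig : ∀ j, Mᵀ *ᵥ f j = μ j • f j)
    (heig' : ∀ j, M'ᵀ *ᵥ f' j = μ' j • f' j)
    (hspan : ∀ (j : ι) (s : Set ι), s ≠ Set.univ →
      f' j ∉ Submodule.span ℝ (f '' s))
    (A : Matrix ι ι ℝ)
    (hAM : M * A = A * M)
    (hAM' : M' * A = A * M')
    (htr : ∑ x, ∑ x', A x x' = 0) :
    A = 0 := by
  rcases isEmpty_or_nonempty ι with hι | hι
  · ext x y; exact isEmptyElim x
  obtain ⟨a, ha⟩ := aux13 M μ f hμ hf heig A hAM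
  obtain ⟨a', ha'⟩ := aux13 M' μ' f' hμ' hf' heig' A hAM'
  have hli : LinearIndependent ℝ f := by
    apply Module.End.eigenvectors_linearIndependent' (Matrix.mulVecLin Mᵀ) μ hμ f
    intro i
    refine ⟨?_, hf i⟩
    rw [Module.End.mem_eigenspace_iff, Matrix.mulVecLin_apply]
    exact heig i
  let b : Module.Basis ι ℝ (ι → ℝ) := basisOfLinearIndependentOfCardEqFinrank hli ((Module.finrank_pi ℝ).symm)
  have hb : ∀ i, b i = f i := fun i => congrFun (coe_basisOfLinearIndependentOfCardEqFinrank hli _) i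
  set j₀ := Classical.arbitrary ι with hj₀
  set c : ι → ℝ := fun k => b.repr (f' j₀) k with hcdef
  -- all coordinates of f' j₀ in basis f are nonzero
  have hc : ∀ k, c k ≠ 0 := by
    intro k hk
    refine hspan j₀ {k}ᶜ (fun h => by simpa using Set.eq_univ_iff_forall.1 h k) ?_
    have hsum : f' j₀ = ∑ i ∈ Finset.univ.erase k, c i • f i := by
      have he : ∑ i ∈ Finset.univ.erase k, c i • f i = ∑ i, c i • f i :=
        Finset.sum_erase _ (by rw [hk, zero_smul])
      rw [he]
      conv_lhs => rw [← b.sum_repr (f' j₀)]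
      exact Finset.sum_congr rfl fun i _ => by rw [hb]
    rw [hsum]
    refine Submodule.sum_mem _ fun i hi => Submodule.smul_mem _ _ ?_
    exact Submodule.subset_span ⟨i, by simpa using (Finset.mem_erase.1 hi).1, rfl⟩
  -- a is constant
  set lam := a' j₀ with hlam
  have hr : ∀ k, a k = lam := by
    intro k
    have h1 : Aᵀ *ᵥ f' j₀ = ∑ i, (c i * a i) • f i := by
      conv_lhs => rw [← b.sum_repr (f' j₀)]
      simp only [← Matrix.mulVecLin_apply, map_sum, _root_.map_smul]
      refine Finset.sum_congr rfl fun i _ => ?_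
      rw [Matrix.mulVecLin_apply, hb, ha i, smul_smul]
    have h2 := ha' j₀
    rw [h1] at h2
    have h3 := congrArg (fun w => b.repr w k) h2
    simp only [map_sum, _root_.map_smul, Finsupp.coe_finset_sum, Finsupp.coe_smul,
      Finset.sum_apply, Pi.smul_apply, smul_eq_mul] at h3
    simp only [← hb, Module.Basis.repr_self, Finsupp.single_apply, mul_ite, mul_one, mul_zero,
      Finset.sum_ite_eq', Finset.mem_univ, if_true] at h3
    exact mul_left_cancel₀ (hc k) (h3.trans (mul_comm _ _))
  have hAv : ∀ v : ι → ℝ, Aᵀ *ᵥ v = lam • v := by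
    intro v
    conv_lhs => rw [← b.sum_repr v]
    conv_rhs => rw [← b.sum_repr v]
    rw [Finset.smul_sum]
    simp only [← Matrix.mulVecLin_apply, map_sum, _root_.map_smul]
    refine Finset.sum_congr rfl fun i _ => ?_
    rw [Matrix.mulVecLin_apply, hb, ha i, hr i, smul_comm]
  have hE : ∀ x y, A x y = if y = x then lam else 0 := by
    intro x y
    have := congrFun (hAv (Pi.single x 1)) y
    simp only [Matrix.mulVec, dotProduct, Matrix.transpose_apply, Pi.single_apply,
      mul_ite, mul_one, mul_zero, Finset.sum_ite_eq', Finset.mem_univ, if_true,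
      Pi.smul_apply, smul_eq_mul] at this
    rw [this]
  have hcard : (Fintype.card ι : ℝ) * lam = 0 := by
    calc (Fintype.card ι : ℝ) * lam = ∑ x : ι, ∑ y : ι, A x y := by
          simp [hE, Finset.sum_ite_eq', Finset.mul_sum, mul_comm]
      _ = 0 := htr
  have hlam0 : lam = 0 := by
    rcases mul_eq_zero.1 hcard with h | h
    · exact absurd (Nat.cast_eq_zero.1 h) (by simp [Fintype.card_ne_zero])
    · exact h
  ext x y
  rw [hE x y, hlam0]
  simp
end

section
/- Let (W,V) and (W',V') be independent-type pairs on the same finite sets X, Y. Assume the vectors V_{*,x'} (x' ∈ X) are linearly independent, W is invertible, and there exists an invertible d×d matrix T with Tᵀ·u_X = u_X such that T·W·D(V_y) = W'·D(V'_y)·T for every y ∈ Y. Then T is a permutation matrix; consequently there is a permutation σ of X with W' = T W T⁻¹ and V'(y|σ(x)) = V(y|x) for all y ∈ Y and x ∈ X. -/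
open Matrix

/-- Let `(W,V)` and `(W',V')` be independent-type pairs on `X`, `Y`.
Assume the vectors `V_{*,x'}` are linearly independent, `W` is invertible, and there is an
invertible matrix `T` with `Tᵀ u_X = u_X` and `T W D(V_y) = W' D(V'_y) T` for every `y`.
Then `T` is a permutation matrix: there is a permutation `σ` of `X` with
`T r x = δ_{r, σ x}`, `W' = T W T⁻¹` and `V'(y | σ x) = V(y | x)`. -/
theorem stmt15 {X Y : Type*} [Fintype X] [DecidableEq X] [Fintype Y]
    (W W' : Matrix X X ℝ) (V V' : Y → X → ℝ)
    (hWpos : ∀ x x', 0 ≤ W x x') (hWstoch : ∀ x', ∑ x, W x x' = 1)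
    (hW'pos : ∀ x x', 0 ≤ W' x x') (hW'stoch : ∀ x', ∑ x, W' x x' = 1)
    (hVpos : ∀ y x', 0 ≤ V y x') (hVstoch : ∀ x', ∑ y, V y x' = 1)
    (hV'pos : ∀ y x', 0 ≤ V' y x') (hV'stoch : ∀ x', ∑ y, V' y x' = 1)
    (hind : LinearIndependent ℝ (fun x' : X => fun y : Y => V y x'))
    (hW : IsUnit W)
    (T : Matrix X X ℝ) [Invertible T]
    (hTu : Tᵀ *ᵥ (fun _ => (1 : ℝ)) = fun _ => (1 : ℝ))
    (hTW : ∀ y, T * (W * Matrix.diagonal (V y)) = W' * Matrix.diagonal (V' y) * T) :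
    ∃ σ : Equiv.Perm X,
      (∀ r x, T r x = if r = σ x then 1 else 0) ∧
      W' = T * W * ⅟T ∧
      ∀ y x, V' y (σ x) = V y x := by
  have hdet : (T.det : ℝ) ≠ 0 :=
    ((Matrix.isUnit_iff_isUnit_det T).mp (isUnit_of_invertible T)).ne_zero
  -- sums of diagonals are the identity
  have hsum1 : ∑ y, Matrix.diagonal (V y) = (1 : Matrix X X ℝ) := by
    ext i j
    rw [Matrix.sum_apply]
    by_cases h : i = j
    · subst h
      simp [Matrix.diagonal_apply_eq, hVstoch]
    · simp [Matrix.diagonal_apply_ne _ h, Matrix.one_apply_ne h]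
  have hsum2 : ∑ y, Matrix.diagonal (V' y) = (1 : Matrix X X ℝ) := by
    ext i j
    rw [Matrix.sum_apply]
    by_cases h : i = j
    · subst h
      simp [Matrix.diagonal_apply_eq, hV'stoch]
    · simp [Matrix.diagonal_apply_ne _ h, Matrix.one_apply_ne h]
  have h1 : T * W = W' * T := by
    calc T * W = T * (W * ∑ y, Matrix.diagonal (V y)) := by rw [hsum1, mul_one]
    _ = ∑ y, T * (W * Matrix.diagonal (V y)) := by rw [Finset.mul_sum, Finset.mul_sum]
    _ = ∑ y, W' * Matrix.diagonal (V' y) * T := Finset.sum_congr rfl (fun y _ => hTW y)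
    _ = W' * (∑ y, Matrix.diagonal (V' y)) * T := by rw [← Finset.sum_mul, ← Finset.mul_sum]
    _ = W' * T := by rw [hsum2, mul_one]
  have hW' : W' = T * W * ⅟T := by
    calc W' = W' * T * ⅟T := by rw [mul_assoc, mul_invOf_self, mul_one]
    _ = T * W * ⅟T := by rw [← h1]
  have hu : IsUnit (T * W) := (isUnit_of_invertible T).mul hW
  have key : ∀ y, T * Matrix.diagonal (V y) = Matrix.diagonal (V' y) * T := by
    intro y
    have h2 := hTW y
    rw [hW'] at h2
    have h4 : T * W * Matrix.diagonal (V y)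
        = T * W * (⅟T * (Matrix.diagonal (V' y) * T)) := by
      simp only [mul_assoc] at h2 ⊢
      exact h2
    have h5 := hu.mul_left_cancel h4
    rw [h5, ← mul_assoc, mul_invOf_self, one_mul]
  have hent : ∀ r x, T r x ≠ 0 → ∀ y, V y x = V' y r := by
    intro r x h y
    have h6 : (T * Matrix.diagonal (V y)) r x = (Matrix.diagonal (V' y) * T) r x := by
      rw [key y]
    rw [Matrix.mul_diagonal, Matrix.diagonal_mul, mul_comm (V' y r)] at h6
    exact mul_left_cancel₀ h h6
  have hinj : Function.Injective (fun x' : X => fun y : Y => V y x') := hind.injective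
  have hrow : ∀ r, ∃ x, T r x ≠ 0 ∧ ∀ x', T r x' ≠ 0 → x' = x := by
    intro r
    have hex : ∃ x, T r x ≠ 0 := by
      by_contra hc
      push_neg at hc
      exact hdet (Matrix.det_eq_zero_of_row_eq_zero r hc)
    obtain ⟨x, hx⟩ := hex
    refine ⟨x, hx, fun x' hx' => hinj (funext fun y => ?_)⟩
    show V y x' = V y x
    rw [hent r x' hx' y, ← hent r x hx y]
  choose f hf hfu using hrow
  have hfsurj : Function.Surjective f := by
    intro x
    have hex : ∃ r, T r x ≠ 0 := by
      by_contra hc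
      push_neg at hc
      exact hdet (Matrix.det_eq_zero_of_column_eq_zero x hc)
    obtain ⟨r, hr⟩ := hex
    exact ⟨r, (hfu r x hr).symm⟩
  have hfbij : Function.Bijective f :=
    (Fintype.bijective_iff_surjective_and_card f).mpr ⟨hfsurj, rfl⟩
  set efr := Equiv.ofBijective f hfbij with hefr
  set σ := efr.symm with hσ
  have hfr : ∀ r, efr r = f r := fun r => rfl
  have hzero : ∀ r x, r ≠ σ x → T r x = 0 := by
    intro r x hne
    by_contra hc
    apply hne
    have hx : x = f r := hfu r x hc
    rw [hx, hσ, ← hfr r, Equiv.symm_apply_apply]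
  have hcol : ∀ x, ∑ r, T r x = 1 := by
    intro x
    have h := congrFun hTu x
    simpa [Matrix.mulVec, dotProduct, Matrix.transpose_apply] using h
  have hone : ∀ x, T (σ x) x = 1 := by
    intro x
    have h := hcol x
    rwa [Finset.sum_eq_single (σ x) (fun r _ hr => hzero r x hr)
      (fun h => absurd (Finset.mem_univ _) h)] at h
  refine ⟨σ, fun r x => ?_, hW', fun y x => ?_⟩
  · by_cases h : r = σ x
    · rw [if_pos h, h]; exact hone x
    · rw [if_neg h]; exact hzero r x h
  · exact (hent (σ x) x (by rw [hone x]; exact one_ne_zero) y).symm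
end

section
/- Let W⃗ be a Y-valued transition matrix on X with |W⃗| invertible. Suppose there exist a column-stochastic d×d matrix W, a transition matrix V from X to Y, and an invertible d×d matrix T such that T·W_y = W·D(V_y)·T for every y ∈ Y. Then T·|W⃗| = W·T, and for each i ∈ X the i-th column v_i of T⁻¹ is a common eigenvector of all the matrices U_y := |W⃗|⁻¹·W_y with U_y·v_i = V(y|i)·v_i; in particular every U_y is diagonalizable over ℝ with nonnegative real eigenvalues. -/
open Matrix

/-- Let `W⃗` be a `Y`-valued transition matrix on `X` with `|W⃗| = ∑ y, W y`
invertible.  Suppose there are a column-stochastic matrix `Wm`, a transition matrix `V`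
from `X` to `Y`, and an invertible matrix `T` with `T W_y = Wm D(V_y) T` for every `y`.
Then `T |W⃗| = Wm T`, and for each `i` the `i`-th column of `T⁻¹` is a common eigenvector
of all `U_y := |W⃗|⁻¹ W_y` with `U_y v_i = V(y|i) • v_i`; the columns of `T⁻¹` are linearly
independent (so every `U_y` is diagonalizable over `ℝ`) and the eigenvalues `V(y|i)` are
nonnegative. -/
theorem stmt16 {X Y : Type*} [Fintype X] [DecidableEq X] [Fintype Y]
    (W : Y → Matrix X X ℝ)
    (hpos : ∀ y x x', 0 ≤ W y x x')
    (hstoch : ∀ x', ∑ x, (∑ y, W y) x x' = 1)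
    (hS : IsUnit (∑ y, W y))
    (Wm : Matrix X X ℝ)
    (hWmpos : ∀ x x', 0 ≤ Wm x x') (hWmstoch : ∀ x', ∑ x, Wm x x' = 1)
    (V : Y → X → ℝ)
    (hVpos : ∀ y x', 0 ≤ V y x') (hVstoch : ∀ x', ∑ y, V y x' = 1)
    (T : Matrix X X ℝ) [Invertible T]
    (hTW : ∀ y, T * W y = Wm * Matrix.diagonal (V y) * T) :
    T * (∑ y, W y) = Wm * T ∧
    (∀ (y : Y) (i : X),
      ((∑ y', W y')⁻¹ * W y) *ᵥ (fun r => (⅟T) r i)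
        = V y i • fun r => (⅟T) r i) ∧
    LinearIndependent ℝ (fun i : X => fun r => (⅟T) r i) ∧
    (∀ (y : Y) (i : X), 0 ≤ V y i) := by
  have hdiag : (∑ y, diagonal (V y)) = (1 : Matrix X X ℝ) := by
    ext i j
    rw [Matrix.sum_apply]
    by_cases h : i = j
    · subst h; simp [Matrix.diagonal_apply, hVstoch]
    · simp [Matrix.diagonal_apply, Matrix.one_apply, h]
  have hTS : T * (∑ y, W y) = Wm * T := by
    rw [Finset.mul_sum]
    calc ∑ y, T * W y = ∑ y, Wm * diagonal (V y) * T := by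
          exact Finset.sum_congr rfl fun y _ => hTW y
      _ = Wm * (∑ y, diagonal (V y)) * T := by
          rw [Finset.mul_sum, Finset.sum_mul]
      _ = Wm * T := by rw [hdiag, mul_one]
  have hSdet : IsUnit (∑ y, W y).det := (Matrix.isUnit_iff_isUnit_det _).mp hS
  have hWy : ∀ y, W y = ⅟T * Wm * diagonal (V y) * T := by
    intro y
    calc W y = ⅟T * (T * W y) := by rw [← mul_assoc, invOf_mul_self, one_mul]
      _ = ⅟T * Wm * diagonal (V y) * T := by rw [hTW y, mul_assoc, mul_assoc, mul_assoc]
  have hSW : (∑ y, W y) = ⅟T * Wm * T := by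
    calc (∑ y, W y) = ⅟T * (T * (∑ y, W y)) := by rw [← mul_assoc, invOf_mul_self, one_mul]
      _ = ⅟T * Wm * T := by rw [hTS, mul_assoc]
  have hTv : ∀ i : X, T *ᵥ (fun r => (⅟T) r i) = Pi.single i 1 := by
    intro i
    ext r
    have : (T * ⅟T) r i = (1 : Matrix X X ℝ) r i := by rw [mul_invOf_self]
    simpa [Matrix.mulVec, Matrix.mul_apply, Matrix.one_apply, Pi.single_apply,
      dotProduct] using this
  have hdiagv : ∀ (y : Y) (i : X),
      diagonal (V y) *ᵥ (Pi.single i 1 : X → ℝ) = V y i • (Pi.single i 1 : X → ℝ) := by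
    intro y i
    ext r
    by_cases h : r = i <;> simp [Matrix.mulVec_single, Matrix.diagonal_apply, h, Pi.single_apply]
  refine ⟨hTS, ?_, ?_, fun y i => hVpos y i⟩
  · intro y i
    have hSv : (∑ y', W y') *ᵥ (fun r => (⅟T) r i)
        = (⅟T * Wm) *ᵥ (Pi.single i 1 : X → ℝ) := by
      rw [hSW, ← Matrix.mulVec_mulVec, hTv]
    have hWv : W y *ᵥ (fun r => (⅟T) r i)
        = V y i • ((∑ y', W y') *ᵥ (fun r => (⅟T) r i)) := by
      rw [hWy y, ← Matrix.mulVec_mulVec, hTv, ← Matrix.mulVec_mulVec, hdiagv,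
          Matrix.mulVec_smul, hSv]
    rw [← Matrix.mulVec_mulVec, hWv, Matrix.mulVec_smul, Matrix.mulVec_mulVec,
        Matrix.nonsing_inv_mul _ hSdet, Matrix.one_mulVec]
  · rw [Fintype.linearIndependent_iff]
    intro g hg
    have h1 : (⅟T) *ᵥ g = 0 := by
      ext r
      have := congrFun hg r
      simpa [Matrix.mulVec, dotProduct, Finset.sum_apply, mul_comm] using this
    intro j
    have : T *ᵥ ((⅟T) *ᵥ g) = T *ᵥ 0 := by rw [h1]
    rw [Matrix.mulVec_mulVec, mul_invOf_self, Matrix.one_mulVec, Matrix.mulVec_zero] at this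
    exact congrFun this j
end

section
/- Let (W,V) be an independent-type pair on X, Y. Let B be a d×d matrix with Bᵀ·u_X = 0 and let (C_y)_{y∈Y} be vectors in ℝ^X with Σ_{y∈Y} C_y = 0. Then the following are equivalent: (i) there exists a d×d matrix A with Aᵀ·u_X = 0 such that W·D(V_y)·A − A·W·D(V_y) = B·D(V_y) + W·D(C_y) for every y ∈ Y; (ii) there exists a d×d matrix A with Aᵀ·u_X = 0 such that B = [W,A] and W·[D(V_y),A] = W·D(C_y) for every y ∈ Y. -/
open Matrix

/-- Let `(W,V)` be an independent-type pair on `X`, `Y`, `B` a matrix with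
`Bᵀ u_X = 0`, and `(C_y)` vectors with `∑ y, C_y = 0`.  Then the following are equivalent:
(i) there is a matrix `A` with `Aᵀ u_X = 0` and
`W D(V_y) A − A W D(V_y) = B D(V_y) + W D(C_y)` for every `y`;
(ii) there is a matrix `A` with `Aᵀ u_X = 0`, `B = [W, A]` and
`W [D(V_y), A] = W D(C_y)` for every `y`. -/
theorem stmt17 {X Y : Type*} [Fintype X] [DecidableEq X] [Fintype Y]
    (W : Matrix X X ℝ) (V : Y → X → ℝ)
    (hWpos : ∀ x x', 0 ≤ W x x') (hWstoch : ∀ x', ∑ x, W x x' = 1)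
    (hVpos : ∀ y x', 0 ≤ V y x') (hVstoch : ∀ x', ∑ y, V y x' = 1)
    (B : Matrix X X ℝ) (hB : Bᵀ *ᵥ (fun _ => (1 : ℝ)) = 0)
    (C : Y → X → ℝ) (hC : ∑ y, C y = 0) :
    (∃ A : Matrix X X ℝ, Aᵀ *ᵥ (fun _ => (1 : ℝ)) = 0 ∧
      ∀ y, W * Matrix.diagonal (V y) * A - A * (W * Matrix.diagonal (V y))
        = B * Matrix.diagonal (V y) + W * Matrix.diagonal (C y)) ↔
    (∃ A : Matrix X X ℝ, Aᵀ *ᵥ (fun _ => (1 : ℝ)) = 0 ∧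
      B = W * A - A * W ∧
      ∀ y, W * (Matrix.diagonal (V y) * A - A * Matrix.diagonal (V y))
        = W * Matrix.diagonal (C y)) := by
  have hdV : ∑ y, Matrix.diagonal (V y) = (1 : Matrix X X ℝ) := by
    ext i j
    simp only [Matrix.sum_apply, Matrix.diagonal_apply, Matrix.one_apply]
    by_cases hij : i = j
    · subst hij; simp [hVstoch i]
    · simp [hij]
  have hdC : ∑ y, Matrix.diagonal (C y) = (0 : Matrix X X ℝ) := by
    ext i j
    simp only [Matrix.sum_apply, Matrix.diagonal_apply, Matrix.zero_apply]
    by_cases hij : i = j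
    · subst hij
      simpa using congrFun hC i
    · simp [hij]
  constructor
  · rintro ⟨A, hA, h⟩
    have hsum : ∑ y, (W * Matrix.diagonal (V y) * A - A * (W * Matrix.diagonal (V y)))
        = ∑ y, (B * Matrix.diagonal (V y) + W * Matrix.diagonal (C y)) :=
      Finset.sum_congr rfl fun y _ => h y
    have e1 : ∑ y, W * Matrix.diagonal (V y) * A = W * A := by
      rw [← Finset.sum_mul, ← Finset.mul_sum, hdV, mul_one]
    have e2 : ∑ y, A * (W * Matrix.diagonal (V y)) = A * W := by
      rw [← Finset.mul_sum, ← Finset.mul_sum, hdV, mul_one]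
    have e3 : ∑ y, B * Matrix.diagonal (V y) = B := by
      rw [← Finset.mul_sum, hdV, mul_one]
    have e4 : ∑ y, W * Matrix.diagonal (C y) = 0 := by
      rw [← Finset.mul_sum, hdC, mul_zero]
    rw [Finset.sum_sub_distrib, Finset.sum_add_distrib, e1, e2, e3, e4, add_zero] at hsum
    refine ⟨A, hA, hsum.symm, fun y => ?_⟩
    have h1 := h y
    have h2 : W * (Matrix.diagonal (V y) * A - A * Matrix.diagonal (V y))
        = (W * Matrix.diagonal (V y) * A - A * (W * Matrix.diagonal (V y)))
          - ((W * A - A * W) * Matrix.diagonal (V y)) := by noncomm_ring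
    rw [h2, h1, ← hsum]
    noncomm_ring
  · rintro ⟨A, hA, hBdef, h⟩
    refine ⟨A, hA, fun y => ?_⟩
    rw [hBdef, ← h y]
    noncomm_ring
end

section
/- Let (W,V) be an independent-type pair on X, Y with W invertible. For x ∈ X let S(V)_x := { x' ∈ X : V_{*,x'} = V_{*,x} } and let I_{S(V)_x} denote the diagonal 0–1 matrix projecting onto the coordinates in S(V)_x. Let B be a d×d matrix with Bᵀ·u_X = 0 and (C_y)_{y∈Y} vectors with Σ_{y∈Y} C_y = 0. Then there exists a matrix A with Aᵀ·u_X = 0 and W·D(V_y)·A − A·W·D(V_y) = B·D(V_y) + W·D(C_y) for every y ∈ Y, if and only if C_y = 0 for every y and B = [W,A'] for some matrix A' with A'ᵀ·u_X = 0 and [I_{S(V)_x}, A'] = 0 for every x ∈ X. -/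
open Matrix

/-- Let `(W,V)` be an independent-type pair on `X`, `Y` with `W` invertible.
For `x ∈ X` let `S(V)_x = {x' | V_{*,x'} = V_{*,x}}` and `I_{S(V)_x}` the diagonal `0–1`
projector onto the coordinates in `S(V)_x`.  Let `B` satisfy `Bᵀ u_X = 0` and `(C_y)`
satisfy `∑ y, C_y = 0`.  Then there is a matrix `A` with `Aᵀ u_X = 0` and
`W D(V_y) A − A W D(V_y) = B D(V_y) + W D(C_y)` for every `y`, if and only if `C_y = 0`
for every `y` and `B = [W, A']` for some `A'` with `A'ᵀ u_X = 0` and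
`[I_{S(V)_x}, A'] = 0` for every `x`. -/
theorem stmt18 {X Y : Type*} [Fintype X] [DecidableEq X] [Fintype Y]
    (W : Matrix X X ℝ) (V : Y → X → ℝ)
    (hWpos : ∀ x x', 0 ≤ W x x') (hWstoch : ∀ x', ∑ x, W x x' = 1)
    (hVpos : ∀ y x', 0 ≤ V y x') (hVstoch : ∀ x', ∑ y, V y x' = 1)
    (hW : IsUnit W)
    (B : Matrix X X ℝ) (hB : Bᵀ *ᵥ (fun _ => (1 : ℝ)) = 0)
    (C : Y → X → ℝ) (hC : ∑ y, C y = 0) :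
    (∃ A : Matrix X X ℝ, Aᵀ *ᵥ (fun _ => (1 : ℝ)) = 0 ∧
      ∀ y, W * Matrix.diagonal (V y) * A - A * (W * Matrix.diagonal (V y))
        = B * Matrix.diagonal (V y) + W * Matrix.diagonal (C y)) ↔
    ((∀ y, C y = 0) ∧
      ∃ A' : Matrix X X ℝ, A'ᵀ *ᵥ (fun _ => (1 : ℝ)) = 0 ∧
        B = W * A' - A' * W ∧
        ∀ x : X,
          Matrix.diagonal ({x' : X | (fun y => V y x') = fun y => V y x}.indicator
              fun _ => (1 : ℝ)) * A'
            = A' * Matrix.diagonal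
              ({x' : X | (fun y => V y x') = fun y => V y x}.indicator
                fun _ => (1 : ℝ))) := by
  classical
  have hdiagsum : ∀ (f : Y → X → ℝ),
      ∑ y, Matrix.diagonal (f y) = Matrix.diagonal (∑ y, f y) := by
    intro f
    ext i j
    by_cases h : i = j
    · subst h
      simp [Matrix.sum_apply, Matrix.diagonal_apply_eq, Finset.sum_apply]
    · simp [Matrix.sum_apply, Matrix.diagonal_apply_ne _ h]
  have hVdiag : ∑ y, Matrix.diagonal (V y) = (1 : Matrix X X ℝ) := by
    rw [hdiagsum]
    ext i j
    by_cases h : i = j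
    · subst h
      simp [Matrix.diagonal_apply_eq, Finset.sum_apply, hVstoch i, Matrix.one_apply_eq]
    · simp [Matrix.diagonal_apply_ne _ h, Matrix.one_apply_ne h]
  constructor
  · rintro ⟨A, hA1, hA2⟩
    -- Sum over y to get B = [W, A]
    have hsum : ∑ y, (W * Matrix.diagonal (V y) * A - A * (W * Matrix.diagonal (V y)))
        = ∑ y, (B * Matrix.diagonal (V y) + W * Matrix.diagonal (C y)) :=
      Finset.sum_congr rfl fun y _ => hA2 y
    have hBeq : W * A - A * W = B := by
      have hL : ∑ y, (W * Matrix.diagonal (V y) * A - A * (W * Matrix.diagonal (V y)))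
          = W * A - A * W := by
        rw [Finset.sum_sub_distrib]
        congr 1
        · rw [← Finset.sum_mul, ← Finset.mul_sum, hVdiag, mul_one]
        · rw [← Finset.mul_sum, ← Finset.mul_sum, hVdiag, mul_one]
      have hR : ∑ y, (B * Matrix.diagonal (V y) + W * Matrix.diagonal (C y)) = B := by
        rw [Finset.sum_add_distrib, ← Finset.mul_sum, ← Finset.mul_sum, hVdiag,
          hdiagsum, hC, mul_one,
          show Matrix.diagonal (0 : X → ℝ) = 0 from Matrix.diagonal_zero, mul_zero, add_zero]
      rw [hL, hR] at hsum
      exact hsum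
    -- Cancel W to get the key commutator identity
    have hkey : ∀ y, Matrix.diagonal (V y) * A
        = A * Matrix.diagonal (V y) + Matrix.diagonal (C y) := by
      intro y
      have h := hA2 y
      rw [← hBeq] at h
      have h2 : W * (Matrix.diagonal (V y) * A)
          = W * (A * Matrix.diagonal (V y) + Matrix.diagonal (C y)) := by
        have : W * Matrix.diagonal (V y) * A
            = W * A * Matrix.diagonal (V y) + W * Matrix.diagonal (C y) := by
          have := h
          rw [sub_mul] at this
          linear_combination (norm := noncomm_ring) this
        rw [mul_add, ← mul_assoc, ← mul_assoc]
        exact this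
      exact hW.mul_left_cancel h2
    -- Diagonal entries give C y = 0
    have hC0 : ∀ y, C y = 0 := by
      intro y
      funext x
      have h := congrArg (fun M => M x x) (hkey y)
      simp only [Matrix.diagonal_mul, Matrix.mul_diagonal, Matrix.add_apply,
        Matrix.diagonal_apply_eq] at h
      show C y x = (0 : X → ℝ) x
      simp only [Pi.zero_apply]
      linarith [h]
    -- entrywise commutation
    have hent : ∀ y a b, V y a * A a b = A a b * V y b := by
      intro y a b
      have h := congrArg (fun M => M a b) (hkey y)
      simp only [Matrix.diagonal_mul, Matrix.mul_diagonal, Matrix.add_apply] at h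
      rw [hC0 y, show Matrix.diagonal (0 : X → ℝ) = 0 from Matrix.diagonal_zero] at h
      simpa using h
    have hzero : ∀ a b, (fun y => V y a) ≠ (fun y => V y b) → A a b = 0 := by
      intro a b hne
      obtain ⟨y, hy⟩ := Function.ne_iff.mp hne
      have h := hent y a b
      have : (V y a - V y b) * A a b = 0 := by ring_nf; linarith [h]
      rcases mul_eq_zero.mp this with h' | h'
      · exact absurd (by linarith : V y a = V y b) hy
      · exact h'
    refine ⟨hC0, A, hA1, hBeq.symm, fun x => ?_⟩
    ext a b
    simp only [Matrix.diagonal_mul, Matrix.mul_diagonal]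
    by_cases hab : (fun y => V y a) = (fun y => V y b)
    · have hmem : a ∈ {x' : X | (fun y => V y x') = fun y => V y x}
          ↔ b ∈ {x' : X | (fun y => V y x') = fun y => V y x} := by
        simp only [Set.mem_setOf_eq]
        constructor <;> intro h <;> [rw [← hab]; rw [hab]] <;> exact h
      have hind : ({x' : X | (fun y => V y x') = fun y => V y x}.indicator
            (fun _ => (1 : ℝ))) a
          = ({x' : X | (fun y => V y x') = fun y => V y x}.indicator
            (fun _ => (1 : ℝ))) b := by
        by_cases hm : a ∈ {x' : X | (fun y => V y x') = fun y => V y x}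
        · rw [Set.indicator_of_mem hm, Set.indicator_of_mem (hmem.mp hm)]
        · rw [Set.indicator_of_notMem hm,
            Set.indicator_of_notMem (fun h => hm (hmem.mpr h))]
      rw [hind, mul_comm]
    · rw [hzero a b hab]
      ring
  · rintro ⟨hC0, A, hA1, hBeq, hcomm⟩
    refine ⟨A, hA1, fun y => ?_⟩
    have hzero : ∀ a b, (fun y => V y a) ≠ (fun y => V y b) → A a b = 0 := by
      intro a b hne
      have h := congrArg (fun M => M a b) (hcomm a)
      simp only [Matrix.diagonal_mul, Matrix.mul_diagonal] at h
      have ha : a ∈ {x' : X | (fun y => V y x') = fun y => V y a} := by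
        simp [Set.mem_setOf_eq]
      have hb : b ∉ {x' : X | (fun y => V y x') = fun y => V y a} := by
        simp only [Set.mem_setOf_eq]
        exact fun hh => hne hh.symm
      rw [Set.indicator_of_mem ha, Set.indicator_of_notMem hb] at h
      simpa using h
    have hDA : Matrix.diagonal (V y) * A = A * Matrix.diagonal (V y) := by
      ext a b
      simp only [Matrix.diagonal_mul, Matrix.mul_diagonal]
      by_cases hab : (fun y => V y a) = (fun y => V y b)
      · have : V y a = V y b := congrFun hab y
        rw [this, mul_comm]
      · rw [hzero a b hab]; ring
    rw [hC0 y, show Matrix.diagonal (0 : X → ℝ) = 0 from Matrix.diagonal_zero,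
      mul_zero, add_zero]
    rw [hBeq, sub_mul, mul_assoc W, hDA, ← mul_assoc, ← mul_assoc]
end
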